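/- For 1 ≤ p < 2 and n ≥ 2, the unit vector e₁ in ℓ_p^n does not admit an inner ellipsoid: there is no inner-product norm |·| on ℝⁿ with |z| ≥ ‖z‖_p for all z and |e₁| = 1. -/

import Mathlib

open scoped ENNReal

/-- For `1 ≤ p < 2` and `n ≥ 2`, the unit vector `e₁` of `ℓ_p^n` admits no inner ellipsoid:
there is no inner-product norm (symmetric positive bilinear form `B`) with
`‖z‖_p ≤ √(B z z)` for all `z` and `B e₁ e₁ = 1`. -/
theorem stmt8 (n : ℕ) (hn : 2 ≤ n) (p : ℝ≥0∞) [Fact (1 ≤ p)] (hp : p < 2) :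
    ¬ ∃ B : LinearMap.BilinForm ℝ (PiLp p (fun _ : Fin n => ℝ)),
        (∀ z w, B z w = B w z) ∧
        (∀ z : PiLp p (fun _ : Fin n => ℝ), ‖z‖ ^ 2 ≤ B z z) ∧
        B ((WithLp.equiv p (Fin n → ℝ)).symm (Pi.single (⟨0, by omega⟩ : Fin n) 1))
          ((WithLp.equiv p (Fin n → ℝ)).symm (Pi.single (⟨0, by omega⟩ : Fin n) 1)) = 1 := by
  rintro ⟨B, hsym, hle, hB11⟩
  set q := p.toReal with hqdef
  have hptop : p ≠ ⊤ := (hp.trans_le le_top).ne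
  have hq1 : (1 : ℝ) ≤ q := by
    have := ENNReal.toReal_mono hptop (Fact.out : (1:ℝ≥0∞) ≤ p)
    simpa using this
  have hq2 : q < 2 := by
    have := (ENNReal.toReal_lt_toReal hptop (by norm_num : (2:ℝ≥0∞) ≠ ⊤)).mpr hp
    simpa using this
  have hq0 : 0 < q := zero_lt_one.trans_le hq1
  set i0 : Fin n := ⟨0, by omega⟩ with hi0
  set i1 : Fin n := ⟨1, by omega⟩ with hi1
  have hne : i1 ≠ i0 := by simp [hi0, hi1, Fin.ext_iff]
  set e1 : PiLp p (fun _ : Fin n => ℝ) := (WithLp.equiv p (Fin n → ℝ)).symm (Pi.single i0 1) with he1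
  set e2 : PiLp p (fun _ : Fin n => ℝ) := (WithLp.equiv p (Fin n → ℝ)).symm (Pi.single i1 1) with he2
  set b := B e1 e2 with hb
  set c := B e2 e2 with hc
  -- norm lower bound
  have hnorm : ∀ t : ℝ, 1 + |t| ^ q ≤ ‖e1 + t • e2‖ ^ 2 := by
    intro t
    have habs : (0:ℝ) ≤ |t| ^ q := Real.rpow_nonneg (abs_nonneg t) q
    have hsum : (∑ i, ‖(e1 + t • e2) i‖ ^ q) = 1 + |t| ^ q := by
      have hterm : ∀ i, ‖(e1 + t • e2) i‖ ^ q
          = (Pi.single i0 1 : Fin n → ℝ) i + (Pi.single i1 (|t| ^ q) : Fin n → ℝ) i := by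
        intro i
        rcases eq_or_ne i i0 with rfl | h0
        · simp [he1, he2, hne, Real.norm_eq_abs, Real.one_rpow]
        · rcases eq_or_ne i i1 with rfl | h1
          · simp [he1, he2, hne, h0, Real.norm_eq_abs, Real.abs_rpow_of_nonneg]
          · simp [he1, he2, h0, h1, Real.norm_eq_abs, Real.zero_rpow hq0.ne']
      rw [Finset.sum_congr rfl fun i _ => hterm i, Finset.sum_add_distrib,
        Finset.sum_pi_single', Finset.sum_pi_single']
      simp
    have hnormz : ‖e1 + t • e2‖ = (1 + |t| ^ q) ^ (1 / q) := by
      rw [PiLp.norm_eq_sum hq0, hsum]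
    have hbase : (0:ℝ) ≤ 1 + |t| ^ q := by linarith
    have hsq : ‖e1 + t • e2‖ ^ 2 = (1 + |t| ^ q) ^ (2 / q) := by
      rw [hnormz, ← Real.rpow_natCast ((1 + |t| ^ q) ^ (1/q)) 2, ← Real.rpow_mul hbase]
      norm_num
      ring_nf
    rw [hsq]
    calc 1 + |t| ^ q = (1 + |t| ^ q) ^ (1:ℝ) := (Real.rpow_one _).symm
      _ ≤ (1 + |t| ^ q) ^ (2 / q) := by
          apply Real.rpow_le_rpow_of_exponent_le (by linarith)
          rw [le_div_iff₀ hq0]; linarith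
  -- bilinear expansion
  have hexp : ∀ t : ℝ, B (e1 + t • e2) (e1 + t • e2) = 1 + 2 * t * b + t ^ 2 * c := by
    intro t
    simp only [map_add, map_smul, LinearMap.add_apply, LinearMap.smul_apply, smul_eq_mul, hB11]
    rw [show B e2 e1 = b from (hsym e1 e2).symm]
    ring
  have key : ∀ t : ℝ, |t| ^ q ≤ 2 * t * b + t ^ 2 * c := by
    intro t
    have := (hnorm t).trans ((hle _).trans_eq (hexp t))
    linarith
  -- choose ε
  set M := max c 1 with hM
  have hM1 : (1:ℝ) ≤ M := le_max_right _ _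
  have hMc : c ≤ M := le_max_left _ _
  have h2q : (0:ℝ) < 2 - q := by linarith
  set ε := (M + 1) ^ (-(1 / (2 - q))) with hε
  have hM0 : (0:ℝ) < M + 1 := by linarith
  have hε0 : 0 < ε := Real.rpow_pos_of_pos hM0 _
  set t := if 0 ≤ b then -ε else ε with ht
  have htabs : |t| = ε := by
    rcases le_or_gt 0 b with h | h
    · rw [ht, if_pos h, abs_neg, abs_of_pos hε0]
    · rw [ht, if_neg (not_le.mpr h), abs_of_pos hε0]
  have htb : 2 * t * b ≤ 0 := by
    rcases le_or_gt 0 b with h | h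
    · simp only [ht, if_pos h]; nlinarith
    · simp only [ht, if_neg (not_le.mpr h)]; nlinarith
  have ht2 : t ^ 2 = ε ^ 2 := by
    rcases le_or_gt 0 b with h | h
    · rw [ht, if_pos h]; ring
    · rw [ht, if_neg (not_le.mpr h)]
  have hkey := key t
  rw [htabs, ht2] at hkey
  have h1 : ε ^ q ≤ ε ^ 2 * M := by
    have : ε ^ 2 * c ≤ ε ^ 2 * M := by nlinarith [sq_nonneg ε]
    linarith
  have hεq : ε ^ q = ε ^ (q - 2 : ℝ) * ε ^ 2 := by
    rw [← Real.rpow_natCast ε 2, ← Real.rpow_add hε0]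
    norm_num
  have h2 : ε ^ (q - 2 : ℝ) ≤ M := by
    have hε2 : (0:ℝ) < ε ^ 2 := by positivity
    rw [hεq] at h1
    exact (mul_le_mul_iff_of_pos_right hε2).mp (by linarith)
  have h3 : ε ^ (q - 2 : ℝ) = M + 1 := by
    rw [hε, ← Real.rpow_mul hM0.le]
    rw [show -(1 / (2 - q)) * (q - 2) = 1 by field_simp; ring]
    exact Real.rpow_one _
  rw [h3] at h2
  linarith
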